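/- If A is an infinite matrix mapping ℓ_∞(F̂) into c_0 (or into c, the convergent sequences), then the induced operator L_A : ℓ_∞(F̂) → c_0 (resp. c) is compact. -/

import Mathlib

open scoped BigOperators ENNReal
open Filter Topology

noncomputable def fibr (n : ℕ) : ℝ := (Nat.fib (n + 1) : ℝ)

lemma fibr_pos (n : ℕ) : 0 < fibr n := by
  simpa [fibr] using Nat.cast_pos.mpr (Nat.fib_pos.mpr (Nat.succ_pos n))

noncomputable def Fhat (x : ℕ → ℝ) : ℕ → ℝ
  | 0 => x 0
  | (n + 1) => fibr (n + 1) / fibr (n + 2) * x (n + 1) - fibr (n + 2) / fibr (n + 1) * x n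

lemma Fhat_add (x y : ℕ → ℝ) : Fhat (x + y) = Fhat x + Fhat y := by
  funext n; cases n <;> simp [Fhat] <;> ring

lemma Fhat_smul (c : ℝ) (x : ℕ → ℝ) : Fhat (c • x) = c • Fhat x := by
  funext n; cases n <;> simp [Fhat] <;> ring

noncomputable def FhatL : (ℕ → ℝ) →ₗ[ℝ] (ℕ → ℝ) where
  toFun := Fhat
  map_add' := Fhat_add
  map_smul' := Fhat_smul

lemma Fhat_inj : Function.Injective Fhat := by
  have h0 : ∀ x : ℕ → ℝ, Fhat x = 0 → x = 0 := by
    intro x hx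
    funext n
    induction n with
    | zero => simpa [Fhat] using congrFun hx 0
    | succ n ih =>
        have h := congrFun hx (n + 1)
        simp only [Fhat, ih, Pi.zero_apply, mul_zero, sub_zero] at h
        have h1 : fibr (n + 1) / fibr (n + 2) ≠ 0 :=
          div_ne_zero (fibr_pos _).ne' (fibr_pos _).ne'
        simpa [Pi.zero_apply] using (mul_eq_zero.mp h).resolve_left h1
  have : Function.Injective FhatL := (injective_iff_map_eq_zero' FhatL).mpr
    (fun x => ⟨fun h => h0 x h, fun h => by simp [FhatL, h]; funext n; cases n <;> simp [Fhat]⟩)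
  exact this

noncomputable def FhatLP : PreLp (fun _ : ℕ => ℝ) →ₗ[ℝ] PreLp (fun _ : ℕ => ℝ) where
  toFun x := Fhat x
  map_add' x y := Fhat_add x y
  map_smul' c x := Fhat_smul c x

noncomputable def ellF (p : ℝ≥0∞) : Submodule ℝ (PreLp (fun _ : ℕ => ℝ)) :=
  (lpSubmodule ℝ (fun _ : ℕ => ℝ) p).comap FhatLP

instance (p : ℝ≥0∞) : CoeOut (ellF p) (ℕ → ℝ) := ⟨fun x => (x : PreLp (fun _ : ℕ => ℝ))⟩

noncomputable def ellFtoLp (p : ℝ≥0∞) : ellF p →ₗ[ℝ] lp (fun _ : ℕ => ℝ) p where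
  toFun x := ⟨Fhat (x : ℕ → ℝ), x.2⟩
  map_add' x y := Subtype.ext (Fhat_add (x : ℕ → ℝ) (y : ℕ → ℝ))
  map_smul' c x := Subtype.ext (Fhat_smul c (x : ℕ → ℝ))

lemma ellFtoLp_inj (p : ℝ≥0∞) : Function.Injective (ellFtoLp p) := by
  intro x y h
  have h2 : Fhat (x : ℕ → ℝ) = Fhat (y : ℕ → ℝ) := congrArg Subtype.val h
  exact Subtype.ext (Fhat_inj h2)

noncomputable instance (p : ℝ≥0∞) [Fact (1 ≤ p)] : NormedAddCommGroup (ellF p) :=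
  NormedAddCommGroup.induced _ _ (ellFtoLp p) (ellFtoLp_inj p)

noncomputable instance (p : ℝ≥0∞) [Fact (1 ≤ p)] : NormedSpace ℝ (ellF p) :=
  NormedSpace.induced _ _ _ (ellFtoLp p)

noncomputable def abar (a : ℕ → ℝ) (k : ℕ) : ℝ :=
  ∑' j : ℕ, (fibr (k + j + 1)) ^ 2 / (fibr k * fibr (k + 1)) * a (k + j)

noncomputable def hmnc {X : Type*} [MetricSpace X] (Q : Set X) : ℝ :=
  sInf {ε : ℝ | 0 < ε ∧ ∃ s : Finset X, Q ⊆ ⋃ x ∈ s, Metric.ball x ε}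



instance factTop : Fact ((1 : ℝ≥0∞) ≤ ∞) := ⟨le_top⟩

section Chunk1

lemma fibr_mono : Monotone fibr := fun a b h => by
  unfold fibr; exact_mod_cast Nat.cast_le.mpr (Nat.fib_mono (Nat.succ_le_succ h))

lemma fibr_zero : fibr 0 = 1 := by norm_num [fibr]

lemma fibr_one : fibr 1 = 1 := by norm_num [fibr]

lemma fibr_rec (n : ℕ) : fibr (n+2) = fibr n + fibr (n+1) := by
  unfold fibr
  have : Nat.fib (n+1+2) = Nat.fib (n+1) + Nat.fib (n+2) := Nat.fib_add_two
  push_cast [this]; ring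

lemma two_pow_le_fibr_mul (j : ℕ) : (2:ℝ)^j ≤ fibr j * fibr (j+1) := by
  induction j with
  | zero => norm_num [fibr]
  | succ j ih =>
      have h1 : fibr (j+2) = fibr j + fibr (j+1) := fibr_rec j
      have h2 : fibr j ≤ fibr (j+1) := fibr_mono (by omega)
      have hp := fibr_pos j
      calc (2:ℝ)^(j+1) = 2 * 2^j := by ring
      _ ≤ 2 * (fibr j * fibr (j+1)) := by nlinarith
      _ ≤ fibr (j+1) * fibr (j+2) := by rw [h1]; nlinarith

lemma summable_cinv : Summable (fun j : ℕ => 1 / (fibr j * fibr (j+1))) := by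
  refine Summable.of_nonneg_of_le (fun j => le_of_lt (div_pos one_pos (mul_pos (fibr_pos j) (fibr_pos (j+1))))) (fun j => ?_) summable_geometric_two
  have h := two_pow_le_fibr_mul j
  have hp : (0:ℝ) < 2^j := by positivity
  calc (1:ℝ) / (fibr j * fibr (j+1)) ≤ 1 / 2^j := by
        apply one_div_le_one_div_of_le hp h
  _ = (1/2)^j := by rw [div_pow, one_pow]

noncomputable def cker (k j : ℕ) : ℝ := fibr (k+1)^2 / (fibr j * fibr (j+1))

lemma abar_eq_cker (a : ℕ → ℝ) (k : ℕ) : abar a k = ∑' t, cker (k+t) k * a (k+t) := rfl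

lemma x_eq_sum (x : ℕ → ℝ) : ∀ k, x k = ∑ j ∈ Finset.range (k+1), cker k j * Fhat x j := by
  intro k
  induction k with
  | zero => simp [cker, Fhat, fibr]
  | succ k ih =>
      rw [Finset.sum_range_succ]
      have hrw : ∀ j ∈ Finset.range (k+1), cker (k+1) j * Fhat x j
          = (fibr (k+2)^2 / fibr (k+1)^2) * (cker k j * Fhat x j) := by
        intro j hj
        unfold cker
        have h1 := (fibr_pos (k+1)).ne'
        have h2 := (fibr_pos j).ne'
        have h3 := (fibr_pos (j+1)).ne'
        field_simp
      rw [Finset.sum_congr rfl hrw, ← Finset.mul_sum, ← ih]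
      show x (k+1) = _ * x k + cker (k+1) (k+1) *
        (fibr (k+1) / fibr (k+2) * x (k+1) - fibr (k+2) / fibr (k+1) * x k)
      unfold cker
      have h1 := (fibr_pos (k+1)).ne'
      have h2 := (fibr_pos (k+2)).ne'
      field_simp
      ring

lemma Fhat_S (y : ℕ → ℝ) :
    Fhat (fun k => ∑ j ∈ Finset.range (k+1), cker k j * y j) = y := by
  funext n
  cases n with
  | zero => simp [Fhat, cker, fibr]
  | succ n =>
      show fibr (n+1) / fibr (n+2) * (∑ j ∈ Finset.range (n+2), cker (n+1) j * y j)
        - fibr (n+2) / fibr (n+1) * (∑ j ∈ Finset.range (n+1), cker n j * y j) = y (n+1)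
      rw [Finset.sum_range_succ]
      have hrw : ∀ j ∈ Finset.range (n+1), cker (n+1) j * y j
          = (fibr (n+2)^2 / fibr (n+1)^2) * (cker n j * y j) := by
        intro j hj
        unfold cker
        have h1 := (fibr_pos (n+1)).ne'
        have h2 := (fibr_pos j).ne'
        have h3 := (fibr_pos (j+1)).ne'
        field_simp
      rw [Finset.sum_congr rfl hrw, ← Finset.mul_sum]
      set T := ∑ j ∈ Finset.range (n+1), cker n j * y j with hT
      unfold cker
      have h1 := (fibr_pos (n+1)).ne'
      have h2 := (fibr_pos (n+2)).ne'
      field_simp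
      ring

end Chunk1

section Chunk2

lemma fibr_nonneg (n : ℕ) : 0 ≤ fibr n := (fibr_pos n).le

lemma cker_pos (k j : ℕ) : 0 < cker k j :=
  div_pos (pow_pos (fibr_pos _) 2) (mul_pos (fibr_pos _) (fibr_pos _))

lemma nonneg_of_abs_le {y : ℕ → ℝ} {M : ℝ} (hy : ∀ k, |y k| ≤ M) : 0 ≤ M :=
  le_trans (abs_nonneg _) (hy 0)

lemma summable_mul_bdd {g y : ℕ → ℝ} {M : ℝ} (hg : Summable fun k => |g k|)
    (hy : ∀ k, |y k| ≤ M) : Summable fun k => g k * y k := by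
  apply Summable.of_norm_bounded (hg.mul_right M)
  intro k
  rw [Real.norm_eq_abs, abs_mul]
  exact mul_le_mul_of_nonneg_left (hy k) (abs_nonneg _)

lemma summable_abs_mul_bdd {g y : ℕ → ℝ} {M : ℝ} (hg : Summable fun k => |g k|)
    (hy : ∀ k, |y k| ≤ M) : Summable fun k => |g k * y k| := by
  refine Summable.of_nonneg_of_le (fun k => abs_nonneg _) (fun k => ?_) (hg.mul_right M)
  rw [abs_mul]
  exact mul_le_mul_of_nonneg_left (hy k) (abs_nonneg _)

lemma abs_tsum_mul_le {g y : ℕ → ℝ} {M : ℝ} (hg : Summable fun k => |g k|)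
    (hy : ∀ k, |y k| ≤ M) : |∑' k, g k * y k| ≤ (∑' k, |g k|) * M := by
  have hs : Summable fun k => ‖g k * y k‖ :=
    (summable_abs_mul_bdd hg hy).congr fun k => (Real.norm_eq_abs _).symm
  have h1 := norm_tsum_le_tsum_norm hs
  rw [Real.norm_eq_abs] at h1
  refine h1.trans ?_
  rw [← hg.tsum_mul_right M]
  refine Summable.tsum_le_tsum (fun k => ?_) hs (hg.mul_right M)
  rw [Real.norm_eq_abs, abs_mul]
  exact mul_le_mul_of_nonneg_left (hy k) (abs_nonneg _)

lemma row_summable {a : ℕ → ℝ}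
    (h : Summable fun j : ℕ => |fibr (0 + j + 1) ^ 2 / (fibr 0 * fibr 1) * a (0 + j)|) :
    Summable fun k => fibr (k+1)^2 * |a k| := by
  simp only [Nat.zero_add, fibr_zero, fibr_one, mul_one, div_one] at h
  refine h.congr fun k => ?_
  rw [abs_mul, abs_of_pos (pow_pos (fibr_pos _) 2)]

noncomputable def Fker (a y : ℕ → ℝ) (k j : ℕ) : ℝ :=
  (if j ≤ k then cker k j * a k else 0) * y j

lemma Fker_of_le (a y : ℕ → ℝ) {k j : ℕ} (h : j ≤ k) :
    Fker a y k j = cker k j * a k * y j := by simp [Fker, if_pos h]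

lemma Fker_of_gt (a y : ℕ → ℝ) {k j : ℕ} (h : k < j) :
    Fker a y k j = 0 := by simp [Fker, if_neg (not_le.mpr h)]

set_option maxHeartbeats 1000000 in
lemma key_tsum (a : ℕ → ℝ) (ha0 : Summable fun k => fibr (k+1)^2 * |a k|)
    {y : ℕ → ℝ} {M : ℝ} (hy : ∀ k, |y k| ≤ M) :
    ∑' k, a k * (∑ j ∈ Finset.range (k+1), cker k j * y j) = ∑' j, abar a j * y j := by
  have hM : 0 ≤ M := nonneg_of_abs_le hy
  have h01 : (0 : ℕ → ℝ) ≤ fun k => fibr (k+1)^2 * |a k| := by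
    intro k
    exact mul_nonneg (pow_nonneg (fibr_nonneg _) 2) (abs_nonneg _)
  have h02 : (0 : ℕ → ℝ) ≤ fun j => M * (1 / (fibr j * fibr (j+1))) := by
    intro j
    exact mul_nonneg hM (le_of_lt (div_pos one_pos (mul_pos (fibr_pos _) (fibr_pos _))))
  have hprod : Summable (fun p : ℕ × ℕ =>
      (fibr (p.1+1)^2 * |a p.1|) * (M * (1 / (fibr p.2 * fibr (p.2+1))))) :=
    Summable.mul_of_nonneg ha0 (summable_cinv.mul_left M) h01 h02
  have hFsum : Summable (Function.uncurry (Fker a y)) := by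
    refine Summable.of_norm_bounded hprod (fun p => ?_)
    rcases le_or_gt p.2 p.1 with h | h
    · have he : Function.uncurry (Fker a y) p = cker p.1 p.2 * a p.1 * y p.2 :=
        Fker_of_le a y h
      rw [he, Real.norm_eq_abs, abs_mul, abs_mul, abs_of_pos (cker_pos _ _)]
      calc cker p.1 p.2 * |a p.1| * |y p.2| ≤ cker p.1 p.2 * |a p.1| * M := by
            refine mul_le_mul_of_nonneg_left (hy _) ?_
            exact mul_nonneg (cker_pos _ _).le (abs_nonneg _)
      _ = (fibr (p.1+1)^2 * |a p.1|) * (M * (1 / (fibr p.2 * fibr (p.2+1)))) := by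
            unfold cker
            have h1 := (fibr_pos p.2).ne'
            have h2 := (fibr_pos (p.2+1)).ne'
            field_simp
    · have he : Function.uncurry (Fker a y) p = 0 := Fker_of_gt a y h
      rw [he, norm_zero]
      exact mul_nonneg (mul_nonneg (pow_nonneg (fibr_nonneg _) 2) (abs_nonneg _))
        (mul_nonneg hM (le_of_lt (div_pos one_pos (mul_pos (fibr_pos _) (fibr_pos _)))))
  have hrow1 : ∀ k, ∑' j, Fker a y k j = a k * (∑ j ∈ Finset.range (k+1), cker k j * y j) := by
    intro k
    rw [Finset.mul_sum]
    rw [tsum_eq_sum (s := Finset.range (k+1)) (f := Fker a y k) (fun j hj => by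
      have hkj : k < j := by
        by_contra hc
        exact hj (Finset.mem_range.mpr (Nat.lt_succ_of_le (not_lt.mp hc)))
      exact Fker_of_gt a y hkj)]
    refine Finset.sum_congr rfl fun j hj => ?_
    have hjk : j ≤ k := Nat.lt_succ_iff.mp (Finset.mem_range.mp hj)
    rw [Fker_of_le a y hjk]
    ring
  have hcol : ∀ j, ∑' k, Fker a y k j = abar a j * y j := by
    intro j
    have he : (fun k => Fker a y k j) = fun k => (if j ≤ k then cker k j * a k else 0) * y j :=
      rfl
    rw [he, tsum_mul_right]
    congr 1
    rw [abar_eq_cker]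
    refine (tsum_eq_tsum_of_ne_zero_bij
      (f := fun k => if j ≤ k then cker k j * a k else 0)
      (g := fun t => cker (j+t) j * a (j+t))
      (fun t => j + t.1) (fun t1 t2 h => Subtype.ext (Nat.add_left_cancel h)) ?_ ?_)
    · intro k hk
      have hjk : j ≤ k := by
        by_contra hc
        apply hk
        simp [if_neg hc]
      have hk0 : cker k j * a k ≠ 0 := by
        simpa only [Function.mem_support, if_pos hjk] using hk
      have hk' : j + (k - j) = k := by omega
      have hg : cker (j + (k-j)) j * a (j + (k-j)) ≠ 0 := by rw [hk']; exact hk0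
      exact ⟨⟨k - j, Function.mem_support.mpr hg⟩, hk'⟩
    · intro t
      rw [if_pos (Nat.le_add_right j t.1)]
  have hL : ∑' k, a k * (∑ j ∈ Finset.range (k+1), cker k j * y j)
      = ∑' k, ∑' j, Fker a y k j :=
    tsum_congr fun k => (hrow1 k).symm
  rw [hL, ← Summable.tsum_comm hFsum]
  exact tsum_congr hcol

end Chunk2

section Chunk3

lemma real_mul_sign (r : ℝ) : r * Real.sign r = |r| := by
  rcases lt_trichotomy r 0 with h | h | h
  · rw [Real.sign_of_neg h, abs_of_neg h]; ring
  · simp [h]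
  · rw [Real.sign_of_pos h, abs_of_pos h]; ring

lemma abs_sign_le (r : ℝ) : |Real.sign r| ≤ 1 := by
  rcases lt_trichotomy r 0 with h | h | h
  · simp [Real.sign_of_neg h]
  · simp [h]
  · simp [Real.sign_of_pos h]

lemma tsum_head (f : ℕ → ℝ) (K : ℕ) :
    ∑' k, (if k ≤ K then f k else 0) = ∑ k ∈ Finset.range (K+1), f k := by
  rw [tsum_eq_sum (s := Finset.range (K+1)) (fun j hj => if_neg (by
    simp only [Finset.mem_range] at hj; omega))]
  exact Finset.sum_congr rfl fun k hk => if_pos (by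
    simp only [Finset.mem_range] at hk; omega)

lemma summable_head (f : ℕ → ℝ) (K : ℕ) : Summable (fun k => if k ≤ K then f k else 0) :=
  summable_of_ne_finset_zero (s := Finset.range (K+1)) (fun j hj => if_neg (by
    simp only [Finset.mem_range] at hj; omega))

lemma tsum_tail_eq (f : ℕ → ℝ) (hf : Summable f) (K : ℕ) :
    ∑' k, (if K < k then f k else 0) = (∑' k, f k) - ∑ k ∈ Finset.range (K+1), f k := by
  have hpt : ∀ k, (if K < k then f k else 0) = f k - (if k ≤ K then f k else 0) := by
    intro k; by_cases h : K < k
    · rw [if_pos h, if_neg (by omega)]; ring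
    · rw [if_neg h, if_pos (by omega)]; ring
  rw [tsum_congr hpt, Summable.tsum_sub hf (summable_head f K), tsum_head]

lemma schur (b : ℕ → ℕ → ℝ) (hb : ∀ n, Summable fun k => |b n k|)
    (hc : ∀ y : ℕ → ℝ, (∀ k, |y k| ≤ 1) →
      ∃ l, Tendsto (fun n => ∑' k, b n k * y k) atTop (𝓝 l))
    {ε : ℝ} (hε : 0 < ε) :
    ∃ N, ∀ m, N ≤ m → ∀ n, N ≤ n → (∑' k, |b m k - b n k|) ≤ ε := by
  classical
  by_contra hcon
  push_neg at hcon
  have hdsum : ∀ m n, Summable fun k => |b m k - b n k| := fun m n =>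
    Summable.of_nonneg_of_le (fun k => abs_nonneg _)
      (fun k => by
        simpa [sub_eq_add_neg, abs_neg] using abs_add_le (b m k) (-(b n k)))
      ((hb m).add (hb n))
  have hcoord : ∀ k : ℕ, ∃ l, Tendsto (fun n => b n k) atTop (𝓝 l) := by
    intro k
    obtain ⟨l, hl⟩ := hc (fun j => if j = k then 1 else 0)
      (fun j => by by_cases h : j = k <;> simp [h])
    refine ⟨l, Tendsto.congr (fun n => ?_) hl⟩
    rw [tsum_eq_single k (fun j hj => by simp [if_neg hj])]
    simp
  have hfin : ∀ (K : ℕ), ∃ N, ∀ m, N ≤ m → ∀ n, N ≤ n →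
      (∑ k ∈ Finset.range (K+1), |b m k - b n k|) < ε/8 := by
    intro K
    have hvt : ∃ w, Tendsto (fun n (i : Fin (K+1)) => b n i.1) atTop (𝓝 w) := by
      refine ⟨fun i => (hcoord i.1).choose, ?_⟩
      rw [tendsto_pi_nhds]
      exact fun i => (hcoord i.1).choose_spec
    have hcauchy : CauchySeq (fun n (i : Fin (K+1)) => b n i.1) := hvt.choose_spec.cauchySeq
    obtain ⟨N, hN⟩ := Metric.cauchySeq_iff.mp hcauchy (ε/(8*(K+1))) (by positivity)
    refine ⟨N, fun m hm n hn => ?_⟩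
    have hlt : ∀ k ∈ Finset.range (K+1), |b m k - b n k| < ε/(8*(K+1)) := by
      intro k hk
      have hkK : k < K+1 := Finset.mem_range.mp hk
      calc |b m k - b n k|
          = dist ((fun i : Fin (K+1) => b m i.1) ⟨k,hkK⟩)
            ((fun i : Fin (K+1) => b n i.1) ⟨k,hkK⟩) := (Real.dist_eq _ _).symm
      _ ≤ dist (fun i : Fin (K+1) => b m i.1) (fun i : Fin (K+1) => b n i.1) :=
            dist_le_pi_dist (fun i : Fin (K+1) => b m i.1) (fun i : Fin (K+1) => b n i.1) ⟨k,hkK⟩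
      _ < ε/(8*(K+1)) := hN m hm n hn
    calc ∑ k ∈ Finset.range (K+1), |b m k - b n k|
        < ∑ _k ∈ Finset.range (K+1), ε/(8*(K+1)) :=
          Finset.sum_lt_sum_of_nonempty ⟨0, by simp⟩ hlt
    _ = ε/8 := by
        rw [Finset.sum_const, Finset.card_range, nsmul_eq_mul]
        have hK0 : ((K:ℝ)+1) ≠ 0 := by positivity
        field_simp
        push_cast
        ring
  have htail : ∀ m n K', ∃ K, K' < K ∧
      (∑' k, (if K < k then |b m k - b n k| else 0)) < ε/8 := by
    intro m n K'
    have hs := hdsum m n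
    obtain ⟨N₂, hN₂⟩ := (Metric.tendsto_atTop.mp hs.hasSum.tendsto_sum_nat) (ε/8)
      (by positivity)
    refine ⟨max N₂ (K'+1), by omega, ?_⟩
    rw [tsum_tail_eq _ hs]
    have h1 := hN₂ (max N₂ (K'+1) + 1) (by omega)
    rw [Real.dist_eq] at h1
    have h2 := (abs_lt.mp h1).1
    linarith
  have hstep : ∀ t K' : ℕ, ∃ q : ℕ × ℕ × ℕ,
      t ≤ q.1 ∧ t ≤ q.2.1 ∧ K' < q.2.2 ∧
      (∑ k ∈ Finset.range (K'+1), |b q.1 k - b q.2.1 k|) < ε/8 ∧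
      (∑' k, (if q.2.2 < k then |b q.1 k - b q.2.1 k| else 0)) < ε/8 ∧
      ε < ∑' k, |b q.1 k - b q.2.1 k| := by
    intro t K'
    obtain ⟨N₁, hN₁⟩ := hfin K'
    obtain ⟨m, hm, n, hn, hd⟩ := hcon (max t N₁)
    obtain ⟨K, hK1, hK2⟩ := htail m n K'
    exact ⟨(m, n, K), le_trans (le_max_left _ _) hm, le_trans (le_max_left _ _) hn, hK1,
      hN₁ m (le_trans (le_max_right _ _) hm) n (le_trans (le_max_right _ _) hn), hK2, hd⟩
  let step : ℕ → ℕ → ℕ × ℕ × ℕ := fun t K' => (hstep t K').choose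
  let seq : ℕ → ℕ × ℕ × ℕ := fun t => Nat.rec (step 0 0) (fun t' p => step (t'+1) p.2.2) t
  let mf : ℕ → ℕ := fun t => (seq t).1
  let nf : ℕ → ℕ := fun t => (seq t).2.1
  let Kf : ℕ → ℕ := fun t => (seq t).2.2
  have hgood : ∀ t, t+1 ≤ mf (t+1) ∧ t+1 ≤ nf (t+1) ∧ Kf t < Kf (t+1) ∧
      (∑ k ∈ Finset.range (Kf t + 1), |b (mf (t+1)) k - b (nf (t+1)) k|) < ε/8 ∧
      (∑' k, (if Kf (t+1) < k then |b (mf (t+1)) k - b (nf (t+1)) k| else 0)) < ε/8 ∧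
      ε < ∑' k, |b (mf (t+1)) k - b (nf (t+1)) k| :=
    fun t => (hstep (t+1) (Kf t)).choose_spec
  have hKmono : StrictMono Kf := strictMono_nat_of_lt_succ (fun t => (hgood t).2.2.1)
  have hKge : ∀ t, t ≤ Kf t := fun t => hKmono.le_apply
  have hex : ∀ k : ℕ, ∃ t, k ≤ Kf t := fun k => ⟨k, hKge k⟩
  let y : ℕ → ℝ := fun k =>
    Real.sign (b (mf (Nat.find (hex k))) k - b (nf (Nat.find (hex k))) k)
  have hy1 : ∀ k, |y k| ≤ 1 := fun k => abs_sign_le _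
  have hblock : ∀ t k, Kf t < k → k ≤ Kf (t+1) → Nat.find (hex k) = t+1 := by
    intro t k h1 h2
    rw [Nat.find_eq_iff]
    refine ⟨h2, fun s hs hks => ?_⟩
    have hle : Kf s ≤ Kf t := hKmono.monotone (by omega)
    omega
  have hysign : ∀ t k, Kf t < k → k ≤ Kf (t+1) →
      y k = Real.sign (b (mf (t+1)) k - b (nf (t+1)) k) := by
    intro t k h1 h2
    show Real.sign _ = _
    rw [hblock t k h1 h2]
  have habs_tsum : ∀ {f g : ℕ → ℝ}, Summable g → (∀ k, |f k| ≤ g k) →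
      |∑' k, f k| ≤ ∑' k, g k := by
    intro f g hg h
    have habs : Summable fun k => |f k| :=
      Summable.of_nonneg_of_le (fun k => abs_nonneg _) h hg
    have hn : Summable fun k => ‖f k‖ := habs.congr fun k => (Real.norm_eq_abs _).symm
    have h1 := norm_tsum_le_tsum_norm hn
    rw [Real.norm_eq_abs] at h1
    refine h1.trans ?_
    refine Summable.tsum_le_tsum (fun k => ?_) hn hg
    rw [Real.norm_eq_abs]; exact h k
  have hlow : ∀ t, ε/2 ≤ ∑' k, (b (mf (t+1)) k - b (nf (t+1)) k) * y k := by
    intro t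
    obtain ⟨hm1, hn1, hKlt, hhead, htl, htot⟩ := hgood t
    set m := mf (t+1) with hm
    set n := nf (t+1) with hn
    set d : ℕ → ℝ := fun k => b m k - b n k with hd
    have hdS : Summable fun k => |d k| := hdsum m n
    have habs : ∀ k, |d k * y k| ≤ |d k| := by
      intro k
      rw [abs_mul]
      calc |d k| * |y k| ≤ |d k| * 1 := mul_le_mul_of_nonneg_left (hy1 k) (abs_nonneg _)
      _ = |d k| := mul_one _
    have hyS : ∀ k, Kf t < k → k ≤ Kf (t+1) → d k * y k = |d k| := by
      intro k hk1 hk2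
      rw [hd]
      show (b m k - b n k) * y k = _
      rw [hysign t k hk1 hk2, ← hm, ← hn, real_mul_sign]
    -- summability of the indicator pieces
    have hsum_head : Summable (fun k => if k ≤ Kf t then |d k| else 0) :=
      summable_head _ _
    have hsum_tail : Summable (fun k => if Kf (t+1) < k then |d k| else 0) := by
      refine Summable.of_nonneg_of_le (fun k => ?_) (fun k => ?_) hdS
      · by_cases h : Kf (t+1) < k
        · rw [if_pos h]; exact abs_nonneg _
        · rw [if_neg h]
      · by_cases h : Kf (t+1) < k
        · rw [if_pos h]
        · rw [if_neg h]; exact abs_nonneg _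
    have hsum_mid : Summable (fun k => if Kf t < k ∧ k ≤ Kf (t+1) then |d k| else 0) := by
      refine Summable.of_nonneg_of_le (fun k => ?_) (fun k => ?_) hdS
      · by_cases h : Kf t < k ∧ k ≤ Kf (t+1)
        · rw [if_pos h]; exact abs_nonneg _
        · rw [if_neg h]
      · by_cases h : Kf t < k ∧ k ≤ Kf (t+1)
        · rw [if_pos h]
        · rw [if_neg h]; exact abs_nonneg _
    have hsplitabs : ∑' k, |d k| = (∑' k, (if k ≤ Kf t then |d k| else 0))
        + (∑' k, (if Kf t < k ∧ k ≤ Kf (t+1) then |d k| else 0))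
        + (∑' k, (if Kf (t+1) < k then |d k| else 0)) := by
      rw [← Summable.tsum_add hsum_head hsum_mid, ← Summable.tsum_add (hsum_head.add hsum_mid) hsum_tail]
      refine tsum_congr fun k => ?_
      show |d k| = (if k ≤ Kf t then |d k| else 0)
        + (if Kf t < k ∧ k ≤ Kf (t+1) then |d k| else 0)
        + (if Kf (t+1) < k then |d k| else 0)
      rcases le_or_gt k (Kf t) with h | h
      · rw [if_pos h, if_neg (by omega), if_neg (by omega)]; ring
      · rcases le_or_gt k (Kf (t+1)) with h2 | h2
        · rw [if_neg (by omega), if_pos ⟨h, h2⟩, if_neg (by omega)]; ring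
        · rw [if_neg (by omega), if_neg (by omega), if_pos h2]; ring
    have hheadlt : (∑' k, (if k ≤ Kf t then |d k| else 0)) < ε/8 := by
      rw [tsum_head]
      exact hhead
    have hmid_gt : ε - ε/8 - ε/8 < ∑' k, (if Kf t < k ∧ k ≤ Kf (t+1) then |d k| else 0) := by
      have := htot
      have := htl
      linarith [hsplitabs]
    -- the three signed pieces
    have hs1 : Summable (fun k => if k ≤ Kf t then d k * y k else 0) := by
      refine Summable.of_norm_bounded hsum_head (fun k => ?_)
      rw [Real.norm_eq_abs]
      by_cases h : k ≤ Kf t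
      · rw [if_pos h, if_pos h]; exact habs k
      · rw [if_neg h, if_neg h, abs_zero]
    have hs2 : Summable (fun k => if Kf t < k ∧ k ≤ Kf (t+1) then d k * y k else 0) := by
      refine Summable.of_norm_bounded hsum_mid (fun k => ?_)
      rw [Real.norm_eq_abs]
      by_cases h : Kf t < k ∧ k ≤ Kf (t+1)
      · rw [if_pos h, if_pos h]; exact habs k
      · rw [if_neg h, if_neg h, abs_zero]
    have hs3 : Summable (fun k => if Kf (t+1) < k then d k * y k else 0) := by
      refine Summable.of_norm_bounded hsum_tail (fun k => ?_)
      rw [Real.norm_eq_abs]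
      by_cases h : Kf (t+1) < k
      · rw [if_pos h, if_pos h]; exact habs k
      · rw [if_neg h, if_neg h, abs_zero]
    have hsplit : ∑' k, d k * y k = (∑' k, (if k ≤ Kf t then d k * y k else 0))
        + (∑' k, (if Kf t < k ∧ k ≤ Kf (t+1) then d k * y k else 0))
        + (∑' k, (if Kf (t+1) < k then d k * y k else 0)) := by
      rw [← Summable.tsum_add hs1 hs2, ← Summable.tsum_add (hs1.add hs2) hs3]
      refine tsum_congr fun k => ?_
      show d k * y k = _
      rcases le_or_gt k (Kf t) with h | h
      · rw [if_pos h, if_neg (by omega), if_neg (by omega)]; ring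
      · rcases le_or_gt k (Kf (t+1)) with h2 | h2
        · rw [if_neg (by omega), if_pos ⟨h, h2⟩, if_neg (by omega)]; ring
        · rw [if_neg (by omega), if_neg (by omega), if_pos h2]; ring
    have hb1 : -(ε/8) ≤ ∑' k, (if k ≤ Kf t then d k * y k else 0) := by
      have hle : ∀ k, |(if k ≤ Kf t then d k * y k else 0)| ≤ (if k ≤ Kf t then |d k| else 0) := by
        intro k
        by_cases h : k ≤ Kf t
        · rw [if_pos h, if_pos h]; exact habs k
        · rw [if_neg h, if_neg h, abs_zero]
      exact neg_le_of_abs_le ((habs_tsum hsum_head hle).trans hheadlt.le)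
    have hb3 : -(ε/8) ≤ ∑' k, (if Kf (t+1) < k then d k * y k else 0) := by
      have hle : ∀ k, |(if Kf (t+1) < k then d k * y k else 0)|
          ≤ (if Kf (t+1) < k then |d k| else 0) := by
        intro k
        by_cases h : Kf (t+1) < k
        · rw [if_pos h, if_pos h]; exact habs k
        · rw [if_neg h, if_neg h, abs_zero]
      exact neg_le_of_abs_le ((habs_tsum hsum_tail hle).trans htl.le)
    have hb2 : ∑' k, (if Kf t < k ∧ k ≤ Kf (t+1) then d k * y k else 0)
        = ∑' k, (if Kf t < k ∧ k ≤ Kf (t+1) then |d k| else 0) := by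
      refine tsum_congr fun k => ?_
      by_cases h : Kf t < k ∧ k ≤ Kf (t+1)
      · rw [if_pos h, if_pos h, hyS k h.1 h.2]
      · rw [if_neg h, if_neg h]
    rw [hsplit, hb2]
    linarith
  -- conclude: the pairing tends to 0 but stays ≥ ε/2
  obtain ⟨l, hl⟩ := hc y hy1
  have hTm : Tendsto (fun t => mf (t+1)) atTop atTop :=
    tendsto_atTop_mono (fun t => le_trans (Nat.le_succ t) (hgood t).1) tendsto_id
  have hTn : Tendsto (fun t => nf (t+1)) atTop atTop :=
    tendsto_atTop_mono (fun t => le_trans (Nat.le_succ t) (hgood t).2.1) tendsto_id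
  have hT := (hl.comp hTm).sub (hl.comp hTn)
  rw [sub_self] at hT
  have heq : ∀ t, ((fun n => ∑' k, b n k * y k) ∘ fun t => mf (t+1)) t
      - ((fun n => ∑' k, b n k * y k) ∘ fun t => nf (t+1)) t
      = ∑' k, (b (mf (t+1)) k - b (nf (t+1)) k) * y k := by
    intro t
    show (∑' k, b (mf (t+1)) k * y k) - (∑' k, b (nf (t+1)) k * y k) = _
    rw [← Summable.tsum_sub (summable_mul_bdd (hb (mf (t+1))) hy1) (summable_mul_bdd (hb (nf (t+1))) hy1)]
    exact tsum_congr fun k => by ring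
  have hfinal : ε/2 ≤ (0:ℝ) := by
    refine ge_of_tendsto' hT (fun t => ?_)
    have h := hlow t
    rw [← heq t] at h
    exact h
  linarith

end Chunk3

theorem stmt13 (A : ℕ → ℕ → ℝ)
    (ha : ∀ n k : ℕ, Summable fun j : ℕ => |fibr (k + j + 1) ^ 2 / (fibr k * fibr (k + 1)) * A n (k + j)|)
    (hrow : ∀ n : ℕ, Summable fun k : ℕ => |abar (A n) k|)
    (L : ellF ∞ →L[ℝ] lp (fun _ : ℕ => ℝ) ∞)
    (hrep : ∀ x : ellF ∞, ∀ n : ℕ, (L x : ℕ → ℝ) n = ∑' k : ℕ, A n k * (x : ℕ → ℝ) k)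
    (hconv : ∀ x : ellF ∞, ∃ l : ℝ, Tendsto (fun n : ℕ => (L x : ℕ → ℝ) n) atTop (𝓝 l)) :
    ∀ s : Set (ellF ∞), Bornology.IsBounded s → TotallyBounded (⇑L '' s) := by
  classical
  intro s hs
  obtain ⟨M0, hM0⟩ := isBounded_iff_forall_norm_le.mp hs
  set M : ℝ := max M0 0 + 1 with hMdef
  have hMpos : 0 < M := by
    have : (0:ℝ) ≤ max M0 0 := le_max_right _ _
    rw [hMdef]; linarith
  have hsM : ∀ x ∈ s, ‖x‖ ≤ M := by
    intro x hx
    have h1 : M0 ≤ max M0 0 := le_max_left _ _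
    have := hM0 x hx
    rw [hMdef]; linarith
  have hbnd : ∀ (x : ellF ∞) (k : ℕ), |Fhat (x : ℕ → ℝ) k| ≤ ‖x‖ := by
    intro x k
    have h := lp.norm_apply_le_norm (E := fun _ : ℕ => ℝ) ENNReal.top_ne_zero
      (ellFtoLp ∞ x) k
    rw [Real.norm_eq_abs] at h
    exact h
  have hLx : ∀ (x : ellF ∞) (n : ℕ),
      (L x : ℕ → ℝ) n = ∑' k, abar (A n) k * Fhat (x : ℕ → ℝ) k := by
    intro x n
    rw [hrep x n]
    have h1 : ∀ k, A n k * (x : ℕ → ℝ) k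
        = A n k * (∑ j ∈ Finset.range (k+1), cker k j * Fhat (x : ℕ → ℝ) j) := by
      intro k
      exact congrArg (A n k * ·) (x_eq_sum (x : ℕ → ℝ) k)
    rw [tsum_congr h1]
    exact key_tsum (A n) (row_summable (ha n 0)) (hbnd x)
  have hcw : ∀ y : ℕ → ℝ, (∀ k, |y k| ≤ 1) →
      ∃ l, Tendsto (fun n => ∑' k, abar (A n) k * y k) atTop (𝓝 l) := by
    intro y hy
    have hml : Memℓp (Fhat (fun k => ∑ j ∈ Finset.range (k+1), cker k j * y j)) ∞ := by
      rw [Fhat_S]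
      apply memℓp_infty
      refine ⟨1, ?_⟩
      rintro r ⟨k, rfl⟩
      simpa [Real.norm_eq_abs] using hy k
    have hmem : (fun k => ∑ j ∈ Finset.range (k+1), cker k j * y j) ∈ ellF ∞ :=
      hml
    set xe : ellF ∞ := ⟨fun k => ∑ j ∈ Finset.range (k+1), cker k j * y j, hmem⟩ with hxe
    obtain ⟨l, hl⟩ := hconv xe
    refine ⟨l, Tendsto.congr (fun n => ?_) hl⟩
    rw [hLx xe n]
    refine tsum_congr fun k => ?_
    have hy' : Fhat (xe : ℕ → ℝ) = y := Fhat_S y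
    rw [hy']
  rw [Metric.totallyBounded_iff]
  intro ε hε
  have h8M : (0:ℝ) < 8 * M := by linarith
  obtain ⟨N, hN⟩ := schur (fun n k => abar (A n) k) hrow hcw (div_pos hε h8M)
  -- uniform tail control on elements of s
  have hdsum2 : ∀ i j : ℕ, Summable fun k => |abar (A i) k - abar (A j) k| := by
    intro i j
    refine Summable.of_nonneg_of_le (fun k => abs_nonneg _) (fun k => ?_)
      ((hrow i).add (hrow j))
    simpa [sub_eq_add_neg, abs_neg] using abs_add_le (abar (A i) k) (-(abar (A j) k))
  have hjump : ∀ z ∈ s, ∀ i, N ≤ i →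
      |(L z : ℕ → ℝ) i - (L z : ℕ → ℝ) N| ≤ ε/8 := by
    intro z hz i hi
    rw [hLx z i, hLx z N,
      ← Summable.tsum_sub (summable_mul_bdd (hrow i) (hbnd z)) (summable_mul_bdd (hrow N) (hbnd z))]
    have heq : ∀ k, abar (A i) k * Fhat (z : ℕ → ℝ) k - abar (A N) k * Fhat (z : ℕ → ℝ) k
        = (abar (A i) k - abar (A N) k) * Fhat (z : ℕ → ℝ) k := fun k => by ring
    rw [tsum_congr heq]
    refine (abs_tsum_mul_le (hdsum2 i N) (hbnd z)).trans ?_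
    calc (∑' k, |abar (A i) k - abar (A N) k|) * ‖z‖ ≤ (ε/(8*M)) * M := by
          refine mul_le_mul (hN i hi N le_rfl) (hsM z hz) (norm_nonneg _)
            (le_of_lt (div_pos hε h8M))
    _ = ε/8 := by field_simp
  -- finite-dimensional ε/8-net for the first N+1 coordinates
  have hcomp : TotallyBounded
      ((fun x : ellF ∞ => fun i : Fin (N+1) => (L x : ℕ → ℝ) i.1) '' s) := by
    refine TotallyBounded.subset ?_ (isCompact_closedBall
      (0 : Fin (N+1) → ℝ) (‖L‖ * M)).totallyBounded
    rintro _ ⟨x, hx, rfl⟩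
    rw [Metric.mem_closedBall, dist_zero_right]
    refine (pi_norm_le_iff_of_nonneg (mul_nonneg (norm_nonneg _) hMpos.le)).mpr fun i => ?_
    calc ‖(L x : ℕ → ℝ) i.1‖ ≤ ‖L x‖ :=
          lp.norm_apply_le_norm ENNReal.top_ne_zero (L x) i.1
    _ ≤ ‖L‖ * ‖x‖ := L.le_opNorm x
    _ ≤ ‖L‖ * M := mul_le_mul_of_nonneg_left (hsM x hx) (norm_nonneg _)
  obtain ⟨t₀, ht₀fin, ht₀⟩ := Metric.totallyBounded_iff.mp hcomp (ε/8) (by positivity)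
  let pick : (Fin (N+1) → ℝ) → ellF ∞ := fun c =>
    if h : ∃ x' ∈ s, (fun i : Fin (N+1) => (L x' : ℕ → ℝ) i.1) ∈ Metric.ball c (ε/8)
    then h.choose else 0
  refine ⟨(fun c => L (pick c)) '' t₀, ht₀fin.image _, ?_⟩
  rintro _ ⟨x, hx, rfl⟩
  have hxmem : (fun i : Fin (N+1) => (L x : ℕ → ℝ) i.1) ∈ ⋃ c ∈ t₀, Metric.ball c (ε/8) :=
    ht₀ ⟨x, hx, rfl⟩
  rw [Set.mem_iUnion₂] at hxmem
  obtain ⟨c, hct, hcball⟩ := hxmem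
  have hexc : ∃ x' ∈ s, (fun i : Fin (N+1) => (L x' : ℕ → ℝ) i.1) ∈ Metric.ball c (ε/8) :=
    ⟨x, hx, hcball⟩
  have hpick : pick c = hexc.choose := dif_pos hexc
  obtain ⟨hx's, hx'ball⟩ := hexc.choose_spec
  set x' : ellF ∞ := hexc.choose with hx'def
  -- coordinatewise estimate
  have hball : ∀ (z : ellF ∞), (fun i : Fin (N+1) => (L z : ℕ → ℝ) i.1) ∈
      Metric.ball c (ε/8) → ∀ i : Fin (N+1), |(L z : ℕ → ℝ) i.1 - c i| < ε/8 := by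
    intro z hzb i
    rw [Metric.mem_ball] at hzb
    calc |(L z : ℕ → ℝ) i.1 - c i|
        = dist ((fun i : Fin (N+1) => (L z : ℕ → ℝ) i.1) i) (c i) := (Real.dist_eq _ _).symm
    _ ≤ dist (fun i : Fin (N+1) => (L z : ℕ → ℝ) i.1) c :=
          dist_le_pi_dist (fun i : Fin (N+1) => (L z : ℕ → ℝ) i.1) c i
    _ < ε/8 := hzb
  have hloc : ∀ i : ℕ, i ≤ N → |(L x : ℕ → ℝ) i - (L x' : ℕ → ℝ) i| ≤ ε/4 := by
    intro i hiN
    have hif : i < N + 1 := by omega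
    have h1 := hball x hcball ⟨i, hif⟩
    have h2 := hball x' hx'ball ⟨i, hif⟩
    have habs : |(L x : ℕ → ℝ) i - (L x' : ℕ → ℝ) i|
        ≤ |(L x : ℕ → ℝ) i - c ⟨i, hif⟩| + |(L x' : ℕ → ℝ) i - c ⟨i, hif⟩| := by
      have he : (L x : ℕ → ℝ) i - (L x' : ℕ → ℝ) i
          = ((L x : ℕ → ℝ) i - c ⟨i, hif⟩) + (-((L x' : ℕ → ℝ) i - c ⟨i, hif⟩)) := by ring
      calc |(L x : ℕ → ℝ) i - (L x' : ℕ → ℝ) i|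
          = |((L x : ℕ → ℝ) i - c ⟨i, hif⟩) + (-((L x' : ℕ → ℝ) i - c ⟨i, hif⟩))| := by rw [he]
      _ ≤ |(L x : ℕ → ℝ) i - c ⟨i, hif⟩| + |(-((L x' : ℕ → ℝ) i - c ⟨i, hif⟩))| := abs_add_le _ _
      _ = |(L x : ℕ → ℝ) i - c ⟨i, hif⟩| + |(L x' : ℕ → ℝ) i - c ⟨i, hif⟩| := by rw [abs_neg]
    have := h1.le
    have := h2.le
    linarith
  have hcoord : ∀ i : ℕ, |(L x : ℕ → ℝ) i - (L x' : ℕ → ℝ) i| ≤ ε/2 := by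
    intro i
    rcases le_or_gt i N with hiN | hiN
    · exact (hloc i hiN).trans (by linarith)
    · have h1 := hjump x hx i hiN.le
      have h2 := hjump x' hx's i hiN.le
      have h3 := hloc N le_rfl
      have hsum3 : (L x : ℕ → ℝ) i - (L x' : ℕ → ℝ) i
          = ((L x : ℕ → ℝ) i - (L x : ℕ → ℝ) N) + ((L x : ℕ → ℝ) N - (L x' : ℕ → ℝ) N)
            + ((L x' : ℕ → ℝ) N - (L x' : ℕ → ℝ) i) := by ring
      calc |(L x : ℕ → ℝ) i - (L x' : ℕ → ℝ) i|
          = |((L x : ℕ → ℝ) i - (L x : ℕ → ℝ) N) + ((L x : ℕ → ℝ) N - (L x' : ℕ → ℝ) N)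
            + ((L x' : ℕ → ℝ) N - (L x' : ℕ → ℝ) i)| := by rw [hsum3]
      _ ≤ |(L x : ℕ → ℝ) i - (L x : ℕ → ℝ) N| + |(L x : ℕ → ℝ) N - (L x' : ℕ → ℝ) N|
            + |(L x' : ℕ → ℝ) N - (L x' : ℕ → ℝ) i| := abs_add_three _ _ _
      _ ≤ ε/8 + ε/4 + ε/8 := by
            refine add_le_add (add_le_add h1 h3) ?_
            rw [abs_sub_comm]
            exact h2
      _ = ε/2 := by ring
  rw [Set.mem_iUnion₂]
  refine ⟨L (pick c), Set.mem_image_of_mem _ hct, ?_⟩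
  rw [Metric.mem_ball, dist_eq_norm, hpick]
  have hnorm : ‖L x - L x'‖ ≤ ε/2 := by
    refine lp.norm_le_of_forall_le (by linarith) fun i => ?_
    rw [lp.coeFn_sub, Pi.sub_apply, Real.norm_eq_abs]
    exact hcoord i
  linarith
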